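/- Let S be a commutative semiring and A a commutative S-algebra (with A a commutative semiring). Suppose A is a Jónsson S-semimodule, i.e., for every S-submodule N of A with N ≠ ⊤, the cardinality of N is strictly less than the cardinality of A. Then every element of A is either a unit or multiplicatively non-cancellative (multiplication by it is not injective). -/

import Mathlib

/-- If a commutative `S`-algebra `A` is a Jónsson `S`-semimodule, then every element
of `A` is either a unit or multiplicatively non-cancellative. -/
theorem stmt_2 {S A : Type*} [CommSemiring S] [CommSemiring A] [Algebra S A]
    (h : ∀ N : Submodule S A, N ≠ ⊤ → Cardinal.mk N < Cardinal.mk A) :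
    ∀ a : A, IsUnit a ∨ ¬ Function.Injective (fun x : A => a * x) := by
  intro a
  by_cases hinj : Function.Injective (fun x : A => a * x)
  · left
    set N : Submodule S A := (Ideal.span {a}).restrictScalars S with hN
    have hmem : ∀ x : A, a * x ∈ N := fun x => by
      simp only [hN, Submodule.restrictScalars_mem]
      exact Ideal.mul_mem_right _ _ (Ideal.subset_span rfl)
    have hle : Cardinal.mk A ≤ Cardinal.mk N := by
      exact Cardinal.mk_le_of_injective (f := fun x => (⟨a * x, hmem x⟩ : N))
        (fun x y hxy => hinj (by simpa using congrArg Subtype.val hxy))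
    have hNtop : N = ⊤ := by
      by_contra hne
      exact absurd hle (not_le.mpr (h N hne))
    have h1 : (1 : A) ∈ Ideal.span {a} := by
      have : (1 : A) ∈ N := hNtop ▸ Submodule.mem_top
      simpa [hN] using this
    rcases Ideal.mem_span_singleton'.mp h1 with ⟨x, hx⟩
    exact IsUnit.of_mul_eq_one (a := a) x (by rw [mul_comm]; exact hx)
  · right; exact hinj
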